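/- There exists a polynomial q with natural-number coefficients such that for every natural number k ≥ 0 there exists a bipartite graph (L, R, E) where: L is the set of all binary strings of length at least k; R is a finite set of cardinality 2^(k+1); every vertex x ∈ L has degree at most q(|x|), where the polynomial q does not depend on k; and every finite subset S ⊆ L with |S| ≥ 2^k has at least 2^k neighbors in R, i.e. |E(S)| ≥ 2^k. -/

import Mathlib

open Finset
open scoped Classical

namespace Stmt7

def strs : ℕ → Finset (List Bool)
  | 0 => {[]}
  | n+1 => ((strs n).image (List.cons true)) ∪ ((strs n).image (List.cons false))

lemma mem_strs (n : ℕ) (x : List Bool) : x ∈ strs n ↔ x.length = n := by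
  induction n generalizing x with
  | zero => cases x <;> simp [strs]
  | succ n ih =>
    cases x with
    | nil => simp [strs]
    | cons b t => cases b <;> simp [strs, ih]

lemma card_strs (n : ℕ) : (strs n).card = 2^n := by
  induction n with
  | zero => simp [strs]
  | succ n ih =>
    rw [strs, card_union_of_disjoint, card_image_of_injective _ (fun a b h => by simpa using h),
      card_image_of_injective _ (fun a b h => by simpa using h), ih]
    · ring
    · simp only [disjoint_left, mem_image]
      rintro a ⟨x, _, rfl⟩ ⟨y, _, h⟩
      simp at h

lemma card_filter_lt (D a : ℕ) (h : a ≤ D) :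
    ((univ : Finset (Fin D)).filter (fun (i : Fin D) => (i:ℕ) < a)).card = a := by
  have : (univ : Finset (Fin D)).filter (fun (i : Fin D) => (i:ℕ) < a)
      = (univ : Finset (Fin a)).image (Fin.castLE h) := by
    ext i
    simp only [mem_filter, mem_univ, true_and, mem_image]
    constructor
    · intro hi; exact ⟨⟨(i:ℕ), hi⟩, by simp [Fin.ext_iff]⟩
    · rintro ⟨j, -, rfl⟩; simp [j.isLt]
  rw [this, Finset.card_image_of_injective _ (Fin.castLE_injective h), card_univ,
    Fintype.card_fin]

/-- hard strings -/
def hard (k : ℕ) (x : List Bool) : Prop := x.length^4 + 16 < 2^k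

noncomputable def H (k : ℕ) : Finset (List Bool) := ((range (2^k)).biUnion strs).filter (hard k)

lemma mem_H (k : ℕ) (x : List Bool) : x ∈ H k ↔ hard k x := by
  simp only [H, mem_filter, mem_biUnion, mem_range, mem_strs, and_iff_right_iff_imp]
  intro hx
  exact ⟨x.length, lt_of_le_of_lt (le_trans (Nat.le_self_pow (by norm_num) _)
    (Nat.le_add_right _ _)) hx, rfl⟩

def deg (x : List Bool) : ℕ := 4 * x.length + 4

def Dk (k : ℕ) : ℕ := 4 * 2^k + 4

lemma deg_le_Dk {k : ℕ} {x : List Bool} (hx : x ∈ H k) : deg x ≤ Dk k := by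
  rw [mem_H] at hx
  have : x.length ≤ 2^k := le_trans (Nat.le_self_pow (by norm_num) _)
    (le_of_lt (lt_of_le_of_lt (Nat.le_add_right _ _) hx))
  simp only [deg, Dk]; omega

/-- sample space -/
abbrev Om (k : ℕ) := {x // x ∈ H k} → Fin (Dk k) → Fin (2^(k+1))

/-- the neighborhood finset of a hard string -/
def Fs (k : ℕ) (ω : Om k) (x : {x // x ∈ H k}) : Finset (Fin (2^(k+1))) :=
  ((univ : Finset (Fin (Dk k))).filter (fun (i : Fin (Dk k)) => (i:ℕ) < deg x.val)).image (ω x)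

lemma card_Fs_le (k : ℕ) (ω : Om k) (x : {x // x ∈ H k}) : (Fs k ω x).card ≤ deg x.val := by
  refine le_trans Finset.card_image_le ?_
  rw [card_filter_lt _ _ (deg_le_Dk x.property)]

def good (k : ℕ) (ω : Om k) : Prop :=
  ∀ A : Finset {x // x ∈ H k}, A.card = 2^k → 2^k ≤ (A.biUnion (Fs k ω)).card

section Counting
variable (k : ℕ)

noncomputable def rr : ℝ := ((2:ℝ)^k - 1) / (2^(k+1))

lemma one_le_two_pow' : (1:ℝ) ≤ 2^k := one_le_pow₀ (by norm_num)

lemma rr_nonneg : 0 ≤ rr k := by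
  have := one_le_two_pow' k
  apply div_nonneg (by linarith) (by positivity)

lemma rr_le_half : rr k ≤ 1/2 := by
  rw [rr, div_le_iff₀ (by positivity), pow_succ]
  nlinarith [one_le_two_pow' k]

lemma cast_card_T : ((2^k - 1 : ℕ) : ℝ) = rr k * 2^(k+1) := by
  have h1 : (1:ℕ) ≤ 2^k := Nat.one_le_two_pow
  push_cast [h1]
  rw [rr, div_mul_cancel₀]
  positivity

noncomputable def Bc (T : Finset (Fin (2^(k+1)))) (g : Fin (2^k) → {x // x ∈ H k}) :
    Finset (Om k) :=
  Fintype.piFinset (fun x => Fintype.piFinset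
    (fun i : Fin (Dk k) => if (∃ j, g j = x) ∧ (i:ℕ) < deg x.val then T else univ))

lemma mem_Bc_of_bad {ω : Om k} (h : ¬ good k ω) :
    ∃ T ∈ Finset.powersetCard (2^k - 1) (univ : Finset (Fin (2^(k+1)))),
      ∃ g : Fin (2^k) → {x // x ∈ H k}, Function.Injective g ∧ ω ∈ Bc k T g := by
  simp only [good, not_forall] at h
  obtain ⟨A, hA, hcard⟩ := h
  push_neg at hcard
  have hle : (A.biUnion (Fs k ω)).card ≤ 2^k - 1 := by omega
  obtain ⟨T, hsub, hT⟩ := Finset.exists_superset_card_eq hle (by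
    simp only [Fintype.card_fin]
    have : 2^k - 1 < 2^k := by
      have : 0 < 2^k := Nat.pow_pos (by norm_num)
      omega
    calc 2^k - 1 ≤ 2^k := le_of_lt this
    _ ≤ 2^(k+1) := Nat.pow_le_pow_right (by norm_num) (by omega))
  refine ⟨T, by simpa [Finset.mem_powersetCard_univ] using hT, ?_⟩
  set g : Fin (2^k) → {x // x ∈ H k} :=
    fun j => (A.equivFin.symm (Fin.cast hA.symm j)).val with hgdef
  have hginj : Function.Injective g := by
    intro a b hab
    have := Subtype.val_injective hab
    have := A.equivFin.symm.injective this
    simpa [Fin.ext_iff] using congrArg Fin.val this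
  have hgA : ∀ j, g j ∈ A := fun j => (A.equivFin.symm (Fin.cast hA.symm j)).property
  refine ⟨g, hginj, ?_⟩
  rw [Bc, Fintype.mem_piFinset]
  intro x
  rw [Fintype.mem_piFinset]
  intro i
  split_ifs with hP
  · obtain ⟨⟨j, rfl⟩, hi⟩ := hP
    apply hsub
    apply Finset.mem_biUnion.2 ⟨g j, hgA j, ?_⟩
    apply Finset.mem_image_of_mem
    simp [hi]
  · exact mem_univ _

lemma card_Bc_le {T : Finset (Fin (2^(k+1)))} {g : Fin (2^k) → {x // x ∈ H k}}
    (hT : T.card = 2^k - 1) (hg : Function.Injective g) :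
    ((Bc k T g).card : ℝ) ≤
      (∏ j : Fin (2^k), rr k ^ deg (g j).val) *
        ((2:ℝ)^(k+1)) ^ (Dk k * (H k).card) := by
  have hcard : ((Bc k T g).card : ℝ)
      = ∏ x : {x // x ∈ H k}, ∏ i : Fin (Dk k),
          (((if (∃ j, g j = x) ∧ (i:ℕ) < deg x.val then T else univ).card : ℕ) : ℝ) := by
    rw [Bc, Fintype.card_piFinset]
    push_cast
    refine Finset.prod_congr rfl (fun x _ => ?_)
    rw [Fintype.card_piFinset]
    push_cast
    rfl
  have hx : ∀ x : {x // x ∈ H k},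
      (∏ i : Fin (Dk k),
        (((if (∃ j, g j = x) ∧ (i:ℕ) < deg x.val then T else univ).card : ℕ) : ℝ))
      = (if ∃ j, g j = x then rr k ^ deg x.val else 1) * ((2:ℝ)^(k+1)) ^ (Dk k) := by
    intro x
    by_cases hP : ∃ j, g j = x
    · simp only [hP, true_and, if_true]
      have hdle : deg x.val ≤ Dk k := deg_le_Dk x.property
      have hstep : ∀ i : Fin (Dk k),
          ((#(if (i:ℕ) < deg x.val then T else univ) : ℕ) : ℝ)
          = if (i:ℕ) < deg x.val then ((#T : ℕ) : ℝ) else ((2:ℝ)^(k+1)) := by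
        intro i; split_ifs <;> simp [card_univ]
      rw [Finset.prod_congr rfl (fun i _ => hstep i), Finset.prod_ite, Finset.prod_const,
        Finset.prod_const, card_filter_lt _ _ hdle]
      have hnotcard : (univ.filter (fun i : Fin (Dk k) => ¬ ((i:ℕ) < deg x.val))).card
          = Dk k - deg x.val := by
        have := Finset.card_filter_add_card_filter_not
          (s := (univ : Finset (Fin (Dk k)))) (p := fun i : Fin (Dk k) => (i:ℕ) < deg x.val)
        rw [card_filter_lt _ _ hdle, card_univ, Fintype.card_fin] at this
        omega
      rw [hnotcard, hT, cast_card_T, mul_pow, mul_assoc, ← pow_add]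
      congr 2
      omega
    · have : ∀ i : Fin (Dk k), ((∃ j, g j = x) ∧ (i:ℕ) < deg x.val) = False := by
        intro i; simp [hP]
      simp only [this, if_false, if_neg hP, card_univ, Fintype.card_fin, one_mul]
      rw [Finset.prod_const, card_univ, Fintype.card_fin]
      push_cast
      ring
  rw [hcard, Finset.prod_congr rfl (fun x _ => hx x), Finset.prod_mul_distrib,
    Finset.prod_const, card_univ, Fintype.card_coe, ← pow_mul]
  apply le_of_eq
  congr 1
  have himg : ∀ x : {x // x ∈ H k}, (∃ j, g j = x) ↔ x ∈ Finset.image g univ := by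
    intro x; simp [Finset.mem_image]
  rw [Finset.prod_congr rfl (fun x _ => by rw [if_congr (himg x) rfl rfl]),
    Finset.prod_ite_mem univ (Finset.image g univ), Finset.univ_inter,
    Finset.prod_image (fun a _ b _ h => hg h)]

lemma wsum_le : ∑ x : {x // x ∈ H k}, rr k ^ deg x.val ≤ 1/8 := by
  have hdis : (↑(range (2^k)) : Set ℕ).PairwiseDisjoint strs := by
    intro a _ b _ hab
    simp only [Finset.disjoint_left, mem_strs]
    intro x hx hx'
    exact hab (by rw [← hx, hx'])
  have inner : ∀ n : ℕ, ∑ x ∈ strs n, (1/2:ℝ)^(deg x) ≤ (1/16) * (1/2)^n := by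
    intro n
    have e0 : ∑ x ∈ strs n, (1/2:ℝ)^(deg x) = ∑ _x ∈ strs n, (1/2:ℝ)^(4*n+4) := by
      refine Finset.sum_congr rfl (fun x hx => ?_)
      rw [mem_strs] at hx
      rw [deg, hx]
    rw [e0, Finset.sum_const, card_strs, nsmul_eq_mul]
    push_cast
    have e1 : (1/2:ℝ)^(4*n+4) = (1/2)^n * (1/2)^(3*n+4) := by
      rw [← pow_add]; congr 1; ring
    calc (2:ℝ)^n * (1/2)^(4*n+4) = (2*(1/2):ℝ)^n * (1/2)^(3*n+4) := by
          rw [e1, mul_pow]; ring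
      _ = (1/2:ℝ)^(3*n+4) := by norm_num
      _ ≤ (1/2:ℝ)^(n+4) := by
          apply pow_le_pow_of_le_one (by norm_num) (by norm_num) (by omega)
      _ = (1/16) * (1/2)^n := by rw [pow_add]; norm_num; ring
  calc ∑ x : {x // x ∈ H k}, rr k ^ deg x.val
      ≤ ∑ x : {x // x ∈ H k}, (1/2:ℝ)^(deg x.val) := by
        refine Finset.sum_le_sum (fun x _ => ?_)
        exact pow_le_pow_left₀ (rr_nonneg k) (rr_le_half k) _
    _ = ∑ x ∈ H k, (1/2:ℝ)^(deg x) := Finset.sum_coe_sort (H k) (fun x => (1/2:ℝ)^(deg x))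
    _ ≤ ∑ x ∈ (range (2^k)).biUnion strs, (1/2:ℝ)^(deg x) := by
        apply Finset.sum_le_sum_of_subset_of_nonneg (Finset.filter_subset _ _)
        intro x _ _; positivity
    _ = ∑ n ∈ range (2^k), ∑ x ∈ strs n, (1/2:ℝ)^(deg x) := Finset.sum_biUnion hdis
    _ ≤ ∑ n ∈ range (2^k), (1/16) * (1/2:ℝ)^n := Finset.sum_le_sum (fun n _ => inner n)
    _ = (1/16) * ∑ n ∈ range (2^k), (1/2:ℝ)^n := by rw [Finset.mul_sum]
    _ ≤ (1/16) * 2 := by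
        have := sum_geometric_two_le (2^k)
        nlinarith [this]
    _ ≤ 1/8 := by norm_num

end Counting

lemma choose_le_two_pow (n r : ℕ) : n.choose r ≤ 2^n := by
  rcases le_or_gt r n with h|h
  · calc n.choose r ≤ ∑ i ∈ range (n+1), n.choose i :=
        Finset.single_le_sum (f := fun i => n.choose i) (fun _ _ => Nat.zero_le _)
          (mem_range.2 (by omega))
    _ = 2^n := Nat.sum_range_choose n
  · rw [Nat.choose_eq_zero_of_lt h]
    exact Nat.zero_le _

theorem exists_good (k : ℕ) : ∃ ω : Om k, good k ω := by
  by_contra hno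
  push_neg at hno
  set m := 2^k with hm
  set 𝒯 := Finset.powersetCard (m - 1) (univ : Finset (Fin (2^(k+1)))) with h𝒯
  set 𝒢 := (univ : Finset (Fin m → {x // x ∈ H k})).filter Function.Injective with h𝒢
  have hcover : (univ : Finset (Om k)) ⊆ 𝒯.biUnion (fun T => 𝒢.biUnion (fun g => Bc k T g)) := by
    intro ω _
    obtain ⟨T, hT, g, hg, hmem⟩ := mem_Bc_of_bad k (hno ω)
    exact Finset.mem_biUnion.2 ⟨T, hT, Finset.mem_biUnion.2
      ⟨g, Finset.mem_filter.2 ⟨mem_univ _, hg⟩, hmem⟩⟩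
  set W : ℝ := ((2:ℝ)^(k+1)) ^ (Dk k * (H k).card) with hWdef
  have hWpos : 0 < W := by positivity
  have hW : ((univ : Finset (Om k)).card : ℝ) = W := by
    rw [card_univ]
    have : Fintype.card (Om k) = ((2^(k+1))^(Dk k))^((H k).card) := by
      rw [Fintype.card_fun, Fintype.card_fun, Fintype.card_fin, Fintype.card_fin,
        Fintype.card_coe]
    rw [this]
    push_cast
    rw [← pow_mul]
  have hstep1 : ((univ : Finset (Om k)).card : ℝ)
      ≤ ∑ T ∈ 𝒯, ∑ g ∈ 𝒢, ((Bc k T g).card : ℝ) := by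
    have h1 : (univ : Finset (Om k)).card
        ≤ ∑ T ∈ 𝒯, ∑ g ∈ 𝒢, (Bc k T g).card := by
      calc (univ : Finset (Om k)).card ≤ (𝒯.biUnion (fun T => 𝒢.biUnion (fun g => Bc k T g))).card :=
            Finset.card_le_card hcover
        _ ≤ ∑ T ∈ 𝒯, (𝒢.biUnion (fun g => Bc k T g)).card := Finset.card_biUnion_le
        _ ≤ ∑ T ∈ 𝒯, ∑ g ∈ 𝒢, (Bc k T g).card :=
            Finset.sum_le_sum (fun T _ => Finset.card_biUnion_le)
    calc ((univ : Finset (Om k)).card : ℝ) ≤ ((∑ T ∈ 𝒯, ∑ g ∈ 𝒢, (Bc k T g).card : ℕ) : ℝ) := by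
          exact_mod_cast h1
      _ = ∑ T ∈ 𝒯, ∑ g ∈ 𝒢, ((Bc k T g).card : ℝ) := by push_cast; rfl
  have hsumg : ∀ T ∈ 𝒯, ∑ g ∈ 𝒢, ((Bc k T g).card : ℝ) ≤ (1/8)^m * W := by
    intro T hT
    have hTcard : T.card = m - 1 := (Finset.mem_powersetCard_univ.1 hT)
    calc ∑ g ∈ 𝒢, ((Bc k T g).card : ℝ)
        ≤ ∑ g ∈ 𝒢, (∏ j : Fin m, rr k ^ deg ((g j) : {x // x ∈ H k}).val) * W := by
          refine Finset.sum_le_sum (fun g hg => ?_)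
          exact card_Bc_le k hTcard (Finset.mem_filter.1 hg).2
      _ ≤ ∑ g ∈ (univ : Finset (Fin m → {x // x ∈ H k})),
            (∏ j : Fin m, rr k ^ deg ((g j) : {x // x ∈ H k}).val) * W := by
          apply Finset.sum_le_sum_of_subset_of_nonneg (Finset.filter_subset _ _)
          intro g _ _
          have : (0:ℝ) ≤ ∏ j : Fin m, rr k ^ deg ((g j) : {x // x ∈ H k}).val :=
            Finset.prod_nonneg (fun j _ => pow_nonneg (rr_nonneg k) _)
          positivity
      _ = (∑ x : {x // x ∈ H k}, rr k ^ deg x.val)^m * W := by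
          rw [← Finset.sum_mul]
          congr 1
          have e := Finset.prod_univ_sum (fun _ : Fin m => (univ : Finset {x // x ∈ H k}))
            (fun _ x => rr k ^ deg x.val)
          rw [Fintype.piFinset_univ] at e
          rw [← e, Finset.prod_const, card_univ, Fintype.card_fin]
      _ ≤ (1/8)^m * W := by
          have h8 : (0:ℝ) ≤ ∑ x : {x // x ∈ H k}, rr k ^ deg x.val :=
            Finset.sum_nonneg (fun x _ => pow_nonneg (rr_nonneg k) _)
          have := pow_le_pow_left₀ h8 (wsum_le k) m
          nlinarith [this, hWpos]
  have hstep2 : ((univ : Finset (Om k)).card : ℝ) ≤ (𝒯.card : ℝ) * ((1/8)^m * W) := by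
    calc ((univ : Finset (Om k)).card : ℝ) ≤ ∑ T ∈ 𝒯, ∑ g ∈ 𝒢, ((Bc k T g).card : ℝ) := hstep1
      _ ≤ ∑ _T ∈ 𝒯, (1/8:ℝ)^m * W := Finset.sum_le_sum hsumg
      _ = (𝒯.card : ℝ) * ((1/8)^m * W) := by rw [Finset.sum_const, nsmul_eq_mul]
  have h𝒯card : (𝒯.card : ℝ) ≤ 4^m := by
    rw [h𝒯, Finset.card_powersetCard, card_univ, Fintype.card_fin]
    have h1 : ((2^(k+1)).choose (m-1)) ≤ 2^(2^(k+1)) := choose_le_two_pow _ _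
    calc (((2^(k+1)).choose (m-1) : ℕ) : ℝ) ≤ ((2^(2^(k+1)) : ℕ) : ℝ) := by exact_mod_cast h1
      _ = 4^m := by
        push_cast
        rw [hm, pow_succ, mul_comm (2^k) 2, pow_mul]
        norm_num
  have hfinal : W ≤ (1/2:ℝ)^m * W := by
    calc W = ((univ : Finset (Om k)).card : ℝ) := hW.symm
      _ ≤ (𝒯.card : ℝ) * ((1/8)^m * W) := hstep2
      _ ≤ 4^m * ((1/8)^m * W) := mul_le_mul_of_nonneg_right h𝒯card (by positivity)
      _ = (4 * (1/8) : ℝ)^m * W := by rw [mul_pow]; ring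
      _ = (1/2:ℝ)^m * W := by norm_num
  have hm1 : (1/2:ℝ)^m < 1 := by
    apply pow_lt_one₀ (by norm_num) (by norm_num)
    positivity
  nlinarith [hWpos, hfinal, hm1]

lemma deg_le_q (n : ℕ) : 4*n + 4 ≤ n^4 + 16 := by
  rcases Nat.lt_or_ge n 2 with h|h
  · interval_cases n <;> norm_num
  · have : n^4 = n * n^3 := by ring
    have h3 : 8 ≤ n^3 := by
      calc (8:ℕ) = 2^3 := by norm_num
      _ ≤ n^3 := Nat.pow_le_pow_left h 3
    nlinarith

end Stmt7

/-- The set of neighbors of a set `S` of left vertices in the bipartite graph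
with edge relation `E`. -/
def nbhd {α β : Type*} (E : Set (α × β)) (S : Set α) : Set β :=
  {y | ∃ x ∈ S, (x, y) ∈ E}

/-- core static construction, Lemma 4: There is a polynomial `q` with
natural coefficients such that for every `k ≥ 0` there is a bipartite graph `(L, R, E)`
where `L` is the set of binary strings of length at least `k`, `|R| = 2^(k+1)`,
every `x ∈ L` has degree at most `q(|x|)` (with `q` independent of `k`), and every
finite `S ⊆ L` with `|S| ≥ 2^k` satisfies `|E(S)| ≥ 2^k`. -/
theorem stmt_7 :
    ∃ q : Polynomial ℕ, ∀ k : ℕ,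
      ∃ (β : Type) (R : Set β) (E : Set (List Bool × β)),
        R.Finite ∧ R.ncard = 2 ^ (k + 1) ∧
        (∀ p ∈ E, k ≤ p.1.length ∧ p.2 ∈ R) ∧
        (∀ x : List Bool, k ≤ x.length → (nbhd E {x}).ncard ≤ q.eval x.length) ∧
        (∀ S : Set (List Bool), (∀ x ∈ S, k ≤ x.length) → S.Finite →
          2 ^ k ≤ S.ncard → 2 ^ k ≤ (nbhd E S).ncard) := by
  classical
  open Stmt7 in
  refine ⟨Polynomial.X^4 + Polynomial.C 16, fun k => ?_⟩
  obtain ⟨ω, hω⟩ := Stmt7.exists_good k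
  set richSet : Finset (Fin (2^(k+1))) :=
    (univ : Finset (Fin (2^(k+1)))).filter (fun y : Fin (2^(k+1)) => (y:ℕ) < 2^k)
    with hrich
  have hrichcard : richSet.card = 2^k := by
    rw [hrich]
    exact Stmt7.card_filter_lt _ _ (Nat.pow_le_pow_right (by norm_num) (by omega))
  set FF : List Bool → Finset (Fin (2^(k+1))) :=
    fun x => if hx : x ∈ Stmt7.H k then Stmt7.Fs k ω ⟨x, hx⟩ else richSet with hFF
  set E : Set (List Bool × Fin (2^(k+1))) :=
    {p | k ≤ p.1.length ∧ p.2 ∈ FF p.1} with hE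
  have heval : ∀ n : ℕ, (Polynomial.X^4 + Polynomial.C 16 : Polynomial ℕ).eval n = n^4 + 16 := by
    intro n; simp
  have hFFcard : ∀ x : List Bool, k ≤ x.length → (FF x).card ≤ x.length^4 + 16 := by
    intro x hk
    rw [hFF]
    dsimp only
    split_ifs with hx
    · refine le_trans (Stmt7.card_Fs_le k ω ⟨x, hx⟩) ?_
      exact le_trans (le_refl _) (Stmt7.deg_le_q x.length)
    · rw [hrichcard]
      have : ¬ Stmt7.hard k x := fun h => hx ((Stmt7.mem_H k x).2 h)
      rw [Stmt7.hard] at this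
      omega
  refine ⟨Fin (2^(k+1)), Set.univ, E, Set.finite_univ, ?_, ?_, ?_, ?_⟩
  · rw [Set.ncard_univ, Nat.card_eq_fintype_card, Fintype.card_fin]
  · intro p hp; exact ⟨hp.1, trivial⟩
  · intro x hk
    have hnb : nbhd E {x} = ↑(FF x) := by
      ext y
      simp only [nbhd, Set.mem_setOf_eq, Set.mem_singleton_iff, hE]
      constructor
      · rintro ⟨x', rfl, h⟩; exact h.2
      · intro hy; exact ⟨x, rfl, hk, hy⟩
    rw [hnb, Set.ncard_coe_finset, heval]
    exact hFFcard x hk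
  · intro S hlen hfin hScard
    have hnbfin : (nbhd E S).Finite := Set.toFinite _
    by_cases hall : ∀ x ∈ S, Stmt7.hard k x
    · set A0 := hfin.toFinset with hA0
      have hA0card : 2^k ≤ A0.card := by
        rwa [← Set.ncard_eq_toFinset_card S hfin]
      obtain ⟨A1, hA1sub, hA1card⟩ := Finset.exists_subset_card_eq hA0card
      have hA1H : ∀ x ∈ A1, x ∈ Stmt7.H k := by
        intro x hx
        exact (Stmt7.mem_H k x).2 (hall x (hfin.mem_toFinset.1 (hA1sub hx)))
      set A : Finset {x // x ∈ Stmt7.H k} := A1.subtype (· ∈ Stmt7.H k) with hA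
      have hAcard : A.card = 2^k := by
        rw [hA, Finset.card_subtype, Finset.filter_true_of_mem hA1H, hA1card]
      have hexp := hω A hAcard
      have hsub : ↑(A.biUnion (Stmt7.Fs k ω)) ⊆ nbhd E S := by
        intro y hy
        simp only [Finset.coe_biUnion, Set.mem_iUnion, Finset.mem_coe] at hy
        obtain ⟨xs, hxsA, hyF⟩ := hy
        have hx1 : xs.val ∈ A1 := by
          rw [hA] at hxsA
          exact Finset.mem_subtype.1 hxsA
        have hxS : xs.val ∈ S := hfin.mem_toFinset.1 (hA1sub hx1)
        refine ⟨xs.val, hxS, ⟨hlen _ hxS, ?_⟩⟩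
        rw [hFF]; dsimp only
        rw [dif_pos xs.property]
        have : (⟨xs.val, xs.property⟩ : {x // x ∈ Stmt7.H k}) = xs := Subtype.ext rfl
        rw [this]
        exact hyF
      calc 2^k ≤ (A.biUnion (Stmt7.Fs k ω)).card := hexp
        _ = (↑(A.biUnion (Stmt7.Fs k ω)) : Set _).ncard := (Set.ncard_coe_finset _).symm
        _ ≤ (nbhd E S).ncard := Set.ncard_le_ncard hsub hnbfin
    · push_neg at hall
      obtain ⟨x0, hx0S, hx0⟩ := hall
      have hsub : ↑richSet ⊆ nbhd E S := by
        intro y hy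
        refine ⟨x0, hx0S, ⟨hlen _ hx0S, ?_⟩⟩
        rw [hFF]; dsimp only
        rw [dif_neg (fun h => hx0 ((Stmt7.mem_H k x0).1 h))]
        exact hy
      calc 2^k = richSet.card := hrichcard.symm
        _ = (↑richSet : Set _).ncard := (Set.ncard_coe_finset _).symm
        _ ≤ (nbhd E S).ncard := Set.ncard_le_ncard hsub hnbfin
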